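/- For the (m+1)-dimensional irreducible representation φ of sl(2,ℂ) and all z₀, z₁, z₂, z₃ ∈ ℂ: det(z₀I + z₁φ(h) + z₂φ(e₁) + z₃φ(e₂)) equals z₀·∏_{l=1}^{m/2}(z₀² - 4l²(z₁² + z₂z₃)) when m is even, and ∏_{l=0}^{(m-1)/2}(z₀² - (2l+1)²(z₁² + z₂z₃)) when m is odd. -/

import Mathlib

open Matrix

/-- `φ(h)` for the irreducible representation of highest weight `m`. -/
def phiH (m : ℕ) : Matrix (Fin (m + 1)) (Fin (m + 1)) ℂ :=
  Matrix.diagonal fun i => (m : ℂ) - 2 * (i : ℕ)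

/-- `φ(e₁)`: `φ(e₁) v_i = (m - i + 1) v_{i-1}`. -/
def phiE (m : ℕ) : Matrix (Fin (m + 1)) (Fin (m + 1)) ℂ :=
  Matrix.of fun i j => if (i : ℕ) + 1 = (j : ℕ) then (m : ℂ) - (j : ℕ) + 1 else 0

/-- `φ(e₂)`: `φ(e₂) v_i = (i + 1) v_{i+1}`. -/
def phiF (m : ℕ) : Matrix (Fin (m + 1)) (Fin (m + 1)) ℂ :=
  Matrix.of fun i j => if (j : ℕ) + 1 = (i : ℕ) then ((j : ℕ) + 1 : ℂ) else 0

def Lmat (m : ℕ) (c : ℂ) : Matrix (Fin (m + 1)) (Fin (m + 1)) ℂ :=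
  Matrix.of fun i j => ((i : ℕ).choose (j : ℕ) : ℂ) * c ^ ((i : ℕ) - (j : ℕ))

lemma choose_key (a b : ℕ) : a * (a-1).choose b = (a - b) * a.choose b := by
  rcases a with _ | a'
  · simp
  · simp only [Nat.add_sub_cancel]
    rcases Nat.lt_or_ge a' b with h | h
    · have e1 : a'.choose b = 0 := Nat.choose_eq_zero_of_lt h
      have e2 : a' + 1 - b = 0 := by omega
      rw [e1, e2]; ring
    · have h1 := Nat.add_one_mul_choose_eq a' b
      have h2 := Nat.choose_succ_right_eq (a'+1) b
      rw [h1, h2]; ring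

lemma choose_key_cast (a b : ℕ) (h : b ≤ a) :
    (a : ℂ) * (a-1).choose b = ((a:ℂ) - b) * a.choose b := by
  have h0 := choose_key a b
  have h1 : ((a * (a-1).choose b : ℕ) : ℂ) = (((a - b) * a.choose b : ℕ) : ℂ) := by rw [h0]
  push_cast [Nat.cast_sub h] at h1
  exact h1

lemma mul_phiF_apply (m : ℕ) (A : Matrix (Fin (m+1)) (Fin (m+1)) ℂ) (i j : Fin (m+1)) :
    (A * phiF m) i j =
      if h : (j:ℕ) + 1 < m + 1 then A i ⟨(j:ℕ)+1, h⟩ * ((j:ℕ)+1) else 0 := by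
  rw [Matrix.mul_apply]
  split
  · next h =>
    rw [Finset.sum_eq_single (⟨(j:ℕ)+1, h⟩ : Fin (m+1))]
    · simp [phiF]
    · intro k _ hk
      have : (j:ℕ) + 1 ≠ (k:ℕ) := fun hc => hk (by ext; simp [← hc])
      simp [phiF, this]
    · simp
  · next h =>
    apply Finset.sum_eq_zero
    intro k _
    have : (j:ℕ) + 1 ≠ (k:ℕ) := by omega
    simp [phiF, this]

lemma phiF_mul_apply (m : ℕ) (A : Matrix (Fin (m+1)) (Fin (m+1)) ℂ) (i j : Fin (m+1)) :
    (phiF m * A) i j = (i:ℕ) * A ⟨(i:ℕ)-1, by omega⟩ j := by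
  rw [Matrix.mul_apply]
  rcases Nat.eq_zero_or_pos (i:ℕ) with h | h
  · have h0 : (((i:ℕ):ℕ):ℂ) = 0 := by rw [h]; simp
    rw [h0, zero_mul]
    apply Finset.sum_eq_zero
    intro k _
    have : ¬ ((k:ℕ) + 1 = (i:ℕ)) := by omega
    simp [phiF, this]
  · rw [Finset.sum_eq_single (⟨(i:ℕ)-1, by omega⟩ : Fin (m+1))]
    · have hii : ((i:ℕ) - 1) + 1 = (i:ℕ) := by omega
      have hc : ((((i:ℕ)-1 : ℕ)):ℂ) + 1 = ((i:ℕ):ℂ) := by exact_mod_cast congrArg (Nat.cast : ℕ → ℂ) hii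
      simp only [phiF, of_apply, hii, if_pos rfl, if_true]
      rw [hc]
    · intro k _ hk
      have : ¬((k:ℕ) + 1 = (i:ℕ)) := fun hc => hk (by ext; simp; omega)
      simp [phiF, this]
    · simp

lemma mul_phiE_apply (m : ℕ) (A : Matrix (Fin (m+1)) (Fin (m+1)) ℂ) (i j : Fin (m+1)) :
    (A * phiE m) i j =
      if (j:ℕ) ≠ 0 then ((m:ℂ) - (j:ℕ) + 1) * A i ⟨(j:ℕ)-1, by omega⟩ else 0 := by
  rw [Matrix.mul_apply]
  split
  · next h =>
    rw [Finset.sum_eq_single (⟨(j:ℕ)-1, by omega⟩ : Fin (m+1))]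
    · have hjj : ((j:ℕ) - 1) + 1 = (j:ℕ) := by omega
      simp only [phiE, of_apply, hjj, if_pos rfl, if_true]
      ring
    · intro k _ hk
      have : ¬((k:ℕ) + 1 = (j:ℕ)) := fun hc => hk (by ext; simp; omega)
      simp [phiE, this]
    · simp
  · next h =>
    apply Finset.sum_eq_zero
    intro k _
    have : ¬((k:ℕ) + 1 = (j:ℕ)) := by omega
    simp [phiE, this]

lemma phiE_mul_apply (m : ℕ) (A : Matrix (Fin (m+1)) (Fin (m+1)) ℂ) (i j : Fin (m+1)) :
    (phiE m * A) i j =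
      if h : (i:ℕ) + 1 < m + 1 then ((m:ℂ) - (i:ℕ)) * A ⟨(i:ℕ)+1, h⟩ j else 0 := by
  rw [Matrix.mul_apply]
  split
  · next h =>
    rw [Finset.sum_eq_single (⟨(i:ℕ)+1, h⟩ : Fin (m+1))]
    · simp only [phiE, of_apply, if_pos rfl]
      push_cast
      ring
    · intro k _ hk
      have : ¬((i:ℕ) + 1 = (k:ℕ)) := fun hc => hk (by ext; simp [hc])
      simp [phiE, this]
    · simp
  · next h =>
    apply Finset.sum_eq_zero
    intro k _
    have : ¬((i:ℕ) + 1 = (k:ℕ)) := by omega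
    simp [phiE, this]

lemma choose_key2 (a b : ℕ) : a * (a-1).choose b = a.choose (b+1) * (b+1) := by
  rcases a with _ | a'
  · simp
  · simpa using Nat.add_one_mul_choose_eq a' b

lemma Lmat_apply (m : ℕ) (c : ℂ) (i j : Fin (m+1)) :
    Lmat m c i j = ((i : ℕ).choose (j : ℕ) : ℂ) * c ^ ((i : ℕ) - (j : ℕ)) := rfl

lemma lemLH (m : ℕ) (c : ℂ) :
    Lmat m c * phiH m = (phiH m + (2*c) • phiF m) * Lmat m c := by
  ext i j
  rw [show phiH m = Matrix.diagonal (fun i : Fin (m+1) => (m : ℂ) - 2 * (i : ℕ)) from rfl]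
  rw [Matrix.mul_diagonal, Matrix.add_mul, Matrix.add_apply, Matrix.diagonal_mul,
    Matrix.smul_mul, Matrix.smul_apply, phiF_mul_apply]
  set a := (i : ℕ); set b := (j : ℕ)
  simp only [Lmat_apply, smul_eq_mul]
  simp only [show (i:ℕ) = a from rfl, show (j:ℕ) = b from rfl]
  rcases Nat.lt_or_ge a b with h | h
  · have h1 : a.choose b = 0 := Nat.choose_eq_zero_of_lt h
    have h2 : (a-1).choose b = 0 := Nat.choose_eq_zero_of_lt (by omega)
    simp [h1, h2]
  · rcases eq_or_lt_of_le h with h' | h'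
    · -- b = a
      have hba : ((b:ℕ):ℂ) = ((a:ℕ):ℂ) := by rw [h']
      have h2 : ((a:ℕ):ℂ) * (((a-1).choose b : ℕ):ℂ) = 0 := by
        rcases Nat.eq_zero_or_pos a with h0 | h0
        · simp [h0]
        · have : (a-1).choose b = 0 := Nat.choose_eq_zero_of_lt (by omega)
          simp [this]
      linear_combination (-2 * ((a.choose b : ℕ):ℂ) * c ^ (a-b)) * hba +
        (-2 * c * c ^ ((a-1)-b)) * h2
    · -- b < a
      have key := choose_key_cast a b (le_of_lt h')
      have hp : a - b = (a - 1 - b) + 1 := by omega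
      rw [hp, pow_succ]
      linear_combination (-2 * c ^ (a - 1 - b) * c) * key

lemma lemLF (m : ℕ) (c : ℂ) :
    Lmat m c * phiF m = phiF m * Lmat m c := by
  ext i j
  rw [mul_phiF_apply, phiF_mul_apply]
  set a := (i : ℕ); set b := (j : ℕ)
  simp only [Lmat_apply]
  simp only [show (i:ℕ) = a from rfl, show (j:ℕ) = b from rfl]
  have key : ((a:ℕ):ℂ) * (((a-1).choose b : ℕ):ℂ) = ((a.choose (b+1) : ℕ):ℂ) * (((b:ℕ):ℂ) + 1) := by
    have h0 := choose_key2 a b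
    have h1 : ((a * (a-1).choose b : ℕ):ℂ) = ((a.choose (b+1) * (b+1) : ℕ):ℂ) := by rw [h0]
    push_cast at h1
    exact h1
  split
  · next h =>
    have he : a - (b + 1) = (a - 1) - b := by omega
    simp only [he]
    linear_combination (- c ^ ((a-1) - b)) * key
  · next h =>
    have hb : b = m := by omega
    have h2 : ((a:ℕ):ℂ) * (((a-1).choose b : ℕ):ℂ) = 0 := by
      rcases Nat.eq_zero_or_pos a with h0 | h0
      · simp [h0]
      · have : (a-1).choose b = 0 := Nat.choose_eq_zero_of_lt (by omega)
        simp [this]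
    linear_combination (- c ^ ((a-1)-b)) * h2

lemma choose_pred_self (n : ℕ) (h : 1 ≤ n) : n.choose (n-1) = n := by
  obtain ⟨p, rfl⟩ : ∃ p, n = p + 1 := ⟨n-1, by omega⟩
  simp [Nat.choose_succ_self_right]

lemma lemLE (m : ℕ) (c : ℂ) :
    Lmat m c * phiE m = (phiE m + (-c) • phiH m + (-(c^2)) • phiF m) * Lmat m c := by
  ext i j
  rw [mul_phiE_apply, Matrix.add_mul, Matrix.add_mul, Matrix.add_apply, Matrix.add_apply,
    phiE_mul_apply, Matrix.smul_mul, Matrix.smul_apply, Matrix.smul_mul, Matrix.smul_apply,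
    phiF_mul_apply,
    show phiH m = Matrix.diagonal (fun i : Fin (m+1) => (m : ℂ) - 2 * (i : ℕ)) from rfl,
    Matrix.diagonal_mul]
  obtain ⟨a, halt⟩ := i
  obtain ⟨b, hblt⟩ := j
  simp only [Lmat_apply, smul_eq_mul, Fin.val_mk]
  have hbm : b ≤ m := by omega
  have ham : a ≤ m := by omega
  by_cases hb0 : b = 0
  · -- b = 0 case
    rw [if_neg (by simp [hb0])]
    subst hb0
    simp only [Nat.sub_zero, Nat.choose_zero_right, Nat.cast_one]
    by_cases ha0 : a = 0
    · subst ha0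
      by_cases hdm : 0 + 1 < m + 1
      · rw [dif_pos hdm]
        push_cast
        ring
      · rw [dif_neg hdm]
        have hm0 : m = 0 := by omega
        subst hm0
        norm_num
    · have p1 : c ^ (a+1) = c ^ (a-1) * c ^ 2 := by
        rw [show a + 1 = (a-1) + 2 from by omega, pow_add]
      have p2 : c ^ a = c ^ (a-1) * c := by
        conv_lhs => rw [show a = (a-1) + 1 from by omega]
        rw [pow_add, pow_one]
      by_cases hdm : a + 1 < m + 1
      · rw [dif_pos hdm, p1, p2]
        ring
      · rw [dif_neg hdm, p2]
        have hma : ((m:ℕ):ℂ) = ((a:ℕ):ℂ) := by rw [show m = a from by omega]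
        linear_combination (c ^ 2 * c ^ (a-1)) * hma
  · -- b ≥ 1
    rw [if_pos (by exact hb0)]
    have hb1 : ((b-1 : ℕ):ℂ) = ((b:ℕ):ℂ) - 1 := by
      rw [Nat.cast_sub (by omega)]; norm_num
    rcases Nat.lt_or_ge a (b-1) with hab | hab
    · -- a + 1 < b : everything vanishes
      have c1 : a.choose (b-1) = 0 := Nat.choose_eq_zero_of_lt hab
      have c2 : (a+1).choose b = 0 := Nat.choose_eq_zero_of_lt (by omega)
      have c3 : a.choose b = 0 := Nat.choose_eq_zero_of_lt (by omega)
      have c4 : (a-1).choose b = 0 := Nat.choose_eq_zero_of_lt (by omega)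
      rw [c1, c2, c3, c4]
      simp
    · rcases eq_or_lt_of_le hab with hab' | hab'
      · -- a = b - 1, i.e. a + 1 = b
        have hb' : b = a + 1 := by omega
        have c1 : a.choose (b-1) = 1 := by rw [← hab']; exact Nat.choose_self _
        have c2 : (a+1).choose b = 1 := by rw [hb']; exact Nat.choose_self _
        have c3 : a.choose b = 0 := Nat.choose_eq_zero_of_lt (by omega)
        have c4 : (a-1).choose b = 0 := Nat.choose_eq_zero_of_lt (by omega)
        have hdm : a + 1 < m + 1 := by omega
        rw [dif_pos hdm, c1, c2, c3, c4]
        rw [show a - (b-1) = 0 from by omega, show a + 1 - b = 0 from by omega]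
        have hba : ((b:ℕ):ℂ) = ((a:ℕ):ℂ) + 1 := by rw [hb']; push_cast; ring
        linear_combination (-1 : ℂ) * hba
      · -- b ≤ a
        have hba : b ≤ a := by omega
        rcases eq_or_lt_of_le hba with he | hlt
        · -- a = b
          have c4 : (a-1).choose b = 0 := Nat.choose_eq_zero_of_lt (by omega)
          have c3 : a.choose b = 1 := by rw [he]; exact Nat.choose_self _
          have c1 : a.choose (b-1) = a := by
            rw [show b - 1 = a - 1 from by omega]
            exact choose_pred_self a (by omega)
          have c2 : (a+1).choose b = a + 1 := by
            rw [he]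
            exact Nat.choose_succ_self_right a
          rw [c1, c2, c3, c4]
          rw [show a - (b-1) = 1 from by omega, show a + 1 - b = 1 from by omega,
            show a - b = 0 from by omega]
          have hbaC : ((b:ℕ):ℂ) = ((a:ℕ):ℂ) := by rw [he]
          by_cases hdm : a + 1 < m + 1
          · rw [dif_pos hdm]
            push_cast
            linear_combination (-c * ((a:ℂ) + 1) + c) * hbaC
          · rw [dif_neg hdm]
            have hma : ((m:ℕ):ℂ) = ((a:ℕ):ℂ) := by rw [show m = a from by omega]
            push_cast
            linear_combination c * hma + (c * (a:ℂ) - c) * hbaC + c * (a:ℂ) * hma +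
              (-2*(a:ℂ)*c + c) * hbaC
        · -- b + 1 ≤ a
          have P1 : (((a+1).choose b : ℕ):ℂ)
              = ((a.choose (b-1) : ℕ):ℂ) + ((a.choose b : ℕ):ℂ) := by
            have := Nat.choose_succ_succ' a (b-1)
            rw [show (b-1)+1 = b from by omega] at this
            exact_mod_cast congrArg (Nat.cast : ℕ → ℂ) this
          have P2 : ((a.choose b : ℕ):ℂ)
              = (((a-1).choose (b-1) : ℕ):ℂ) + (((a-1).choose b : ℕ):ℂ) := by
            have := Nat.choose_succ_succ' (a-1) (b-1)
            rw [show (b-1)+1 = b from by omega, show (a-1)+1 = a from by omega] at this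
            exact_mod_cast congrArg (Nat.cast : ℕ → ℂ) this
          have K := choose_key_cast a (b-1) (by omega)
          rw [hb1] at K
          rw [show a - (b-1) = (a-1-b) + 2 from by omega,
            show a + 1 - b = (a-1-b) + 2 from by omega,
            show a - b = (a-1-b) + 1 from by omega,
            pow_succ, pow_succ, pow_succ]
          set E := c ^ (a - 1 - b) with hE
          by_cases hdm : a + 1 < m + 1
          · rw [dif_pos hdm]
            linear_combination (-((m:ℂ) - (a:ℂ)) * E * c * c) * P1 +
              (-(a:ℂ) * E * c * c) * P2 + (- E * c * c) * K
          · rw [dif_neg hdm]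
            have hma : ((m:ℕ):ℂ) = ((a:ℕ):ℂ) := by rw [show m = a from by omega]
            linear_combination (-((m:ℂ) - (a:ℂ)) * E * c * c) * P1 +
              (-(a:ℂ) * E * c * c) * P2 + (- E * c * c) * K +
              ((((a+1).choose b : ℕ):ℂ) * E * c * c) * hma

lemma conj_main (m : ℕ) (c z₀ z₁ z₂ z₃ : ℂ) :
    Lmat m c * (z₀ • (1 : Matrix (Fin (m+1)) (Fin (m+1)) ℂ) + z₁ • phiH m + z₂ • phiE m + z₃ • phiF m)
      = (z₀ • (1 : Matrix (Fin (m+1)) (Fin (m+1)) ℂ) + (z₁ - c*z₂) • phiH m + z₂ • phiE m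
          + (z₃ + 2*c*z₁ - c^2*z₂) • phiF m) * Lmat m c := by
  simp only [Matrix.mul_add, Matrix.add_mul, Matrix.mul_smul, Matrix.smul_mul, Matrix.mul_one,
    Matrix.one_mul, lemLH m c, lemLE m c, lemLF m c]
  simp only [Matrix.add_mul, Matrix.smul_mul, smul_add, smul_smul]
  module

lemma det_Lmat (m : ℕ) (c : ℂ) : (Lmat m c).det = 1 := by
  have h : (Lmat m c).BlockTriangular (OrderDual.toDual : Fin (m+1) → (Fin (m+1))ᵒᵈ) := by
    intro i j hij
    have : (i:ℕ) < (j:ℕ) := hij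
    have h0 : (i:ℕ).choose (j:ℕ) = 0 := Nat.choose_eq_zero_of_lt this
    simp [Lmat_apply, h0]
  rw [Matrix.det_of_lowerTriangular _ h]
  apply Finset.prod_eq_one
  intro i _
  simp [Lmat_apply]

lemma det_upper (m : ℕ) (z₀ w z₂ : ℂ) :
    (z₀ • (1 : Matrix (Fin (m+1)) (Fin (m+1)) ℂ) + w • phiH m + z₂ • phiE m
      + (0:ℂ) • phiF m).det = ∏ i : Fin (m+1), (z₀ + w * ((m:ℂ) - 2*(i:ℕ))) := by
  have h : (z₀ • (1 : Matrix (Fin (m+1)) (Fin (m+1)) ℂ) + w • phiH m + z₂ • phiE m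
      + (0:ℂ) • phiF m).BlockTriangular (id : Fin (m+1) → Fin (m+1)) := by
    intro i j hij
    have hij' : (j:ℕ) < (i:ℕ) := hij
    have h1 : (1 : Matrix (Fin (m+1)) (Fin (m+1)) ℂ) i j = 0 := by
      rw [Matrix.one_apply_ne (by exact fun hc => absurd (congrArg Fin.val hc) (by omega))]
    have h2 : phiH m i j = 0 := by
      rw [show phiH m = Matrix.diagonal (fun i : Fin (m+1) => (m : ℂ) - 2 * (i : ℕ)) from rfl]
      exact Matrix.diagonal_apply_ne _ (by exact fun hc => absurd (congrArg Fin.val hc) (by omega))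
    have h3 : phiE m i j = 0 := by
      simp only [phiE, Matrix.of_apply]
      rw [if_neg (by omega)]
    simp [h1, h2, h3]
  rw [Matrix.det_of_upperTriangular h]
  apply Finset.prod_congr rfl
  intro i _
  have h1 : (1 : Matrix (Fin (m+1)) (Fin (m+1)) ℂ) i i = 1 := Matrix.one_apply_eq i
  have h2 : phiH m i i = (m:ℂ) - 2 * (i:ℕ) := by
    rw [show phiH m = Matrix.diagonal (fun i : Fin (m+1) => (m : ℂ) - 2 * (i : ℕ)) from rfl]
    exact Matrix.diagonal_apply_eq _ i
  have h3 : phiE m i i = 0 := by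
    simp only [phiE, Matrix.of_apply]
    rw [if_neg (by omega)]
  simp [h1, h2, h3]

lemma det_lower (m : ℕ) (z₀ z₁ z₃ : ℂ) :
    (z₀ • (1 : Matrix (Fin (m+1)) (Fin (m+1)) ℂ) + z₁ • phiH m + (0:ℂ) • phiE m
      + z₃ • phiF m).det = ∏ i : Fin (m+1), (z₀ + z₁ * ((m:ℂ) - 2*(i:ℕ))) := by
  have h : (z₀ • (1 : Matrix (Fin (m+1)) (Fin (m+1)) ℂ) + z₁ • phiH m + (0:ℂ) • phiE m
      + z₃ • phiF m).BlockTriangular (OrderDual.toDual : Fin (m+1) → (Fin (m+1))ᵒᵈ) := by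
    intro i j hij
    have hij' : (i:ℕ) < (j:ℕ) := hij
    have h1 : (1 : Matrix (Fin (m+1)) (Fin (m+1)) ℂ) i j = 0 := by
      rw [Matrix.one_apply_ne (by exact fun hc => absurd (congrArg Fin.val hc) (by omega))]
    have h2 : phiH m i j = 0 := by
      rw [show phiH m = Matrix.diagonal (fun i : Fin (m+1) => (m : ℂ) - 2 * (i : ℕ)) from rfl]
      exact Matrix.diagonal_apply_ne _ (by exact fun hc => absurd (congrArg Fin.val hc) (by omega))
    have h4 : phiF m i j = 0 := by
      simp only [phiF, Matrix.of_apply]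
      rw [if_neg (by omega)]
    simp [h1, h2, h4]
  rw [Matrix.det_of_lowerTriangular _ h]
  apply Finset.prod_congr rfl
  intro i _
  have h1 : (1 : Matrix (Fin (m+1)) (Fin (m+1)) ℂ) i i = 1 := Matrix.one_apply_eq i
  have h2 : phiH m i i = (m:ℂ) - 2 * (i:ℕ) := by
    rw [show phiH m = Matrix.diagonal (fun i : Fin (m+1) => (m : ℂ) - 2 * (i : ℕ)) from rfl]
    exact Matrix.diagonal_apply_eq _ i
  have h4 : phiF m i i = 0 := by
    simp only [phiF, Matrix.of_apply]
    rw [if_neg (by omega)]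
  simp [h1, h2, h4]

lemma det_eq_prod (m : ℕ) (z₀ z₁ z₂ z₃ : ℂ) :
    ∃ u : ℂ, u^2 = z₁^2 + z₂*z₃ ∧
      (z₀ • (1 : Matrix (Fin (m+1)) (Fin (m+1)) ℂ) + z₁ • phiH m + z₂ • phiE m + z₃ • phiF m).det
        = ∏ i : Fin (m+1), (z₀ + u * ((m:ℂ) - 2*(i:ℕ))) := by
  by_cases hz2 : z₂ = 0
  · refine ⟨z₁, by rw [hz2]; ring, ?_⟩
    rw [hz2, det_lower]
  · obtain ⟨u, hu⟩ := IsAlgClosed.exists_pow_nat_eq (z₁^2 + z₂*z₃) (n := 2) (by norm_num)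
    set c := (z₁ + u) / z₂ with hc
    refine ⟨-u, by rw [neg_pow]; simp [hu], ?_⟩
    have key := conj_main m c z₀ z₁ z₂ z₃
    have e1 : z₁ - c * z₂ = -u := by rw [hc, div_mul_cancel₀ _ hz2]; ring
    have hcz : c * z₂ = z₁ + u := by rw [hc, div_mul_cancel₀ _ hz2]
    have h3 : z₂ * (z₃ + 2*c*z₁ - c^2*z₂) = 0 := by
      linear_combination (-(c*z₂) + z₁ - u) * hcz - hu
    have e2 : z₃ + 2*c*z₁ - c^2*z₂ = 0 := (mul_eq_zero.mp h3).resolve_left hz2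
    rw [e1, e2] at key
    have := congrArg Matrix.det key
    rw [Matrix.det_mul, Matrix.det_mul, det_Lmat, one_mul, mul_one] at this
    rw [this, det_upper]

lemma prod_step (z₀ u : ℂ) (n : ℕ) :
    ∏ i ∈ Finset.range (n+3), (z₀ + u*(((n:ℂ)+2) - 2*(i:ℕ))) =
      (z₀^2 - ((n:ℂ)+2)^2*u^2) * ∏ i ∈ Finset.range (n+1), (z₀ + u*((n:ℂ) - 2*(i:ℕ))) := by
  rw [show n + 3 = (n+2) + 1 from rfl, Finset.prod_range_succ,
    show n + 2 = (n+1) + 1 from rfl, Finset.prod_range_succ']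
  have h : ∀ i ∈ Finset.range (n+1),
      (z₀ + u*(((n:ℂ)+2) - 2*((i+1:ℕ):ℂ))) = (z₀ + u*((n:ℂ) - 2*(i:ℕ))) := by
    intro i _
    push_cast
    ring
  rw [Finset.prod_congr rfl h]
  push_cast
  ring

lemma prod_even (z₀ u : ℂ) : ∀ k : ℕ,
    ∏ i ∈ Finset.range (2*k+1), (z₀ + u*(((2*k : ℕ):ℂ) - 2*(i:ℕ))) =
      z₀ * ∏ l ∈ Finset.range k, (z₀^2 - 4*((l:ℂ)+1)^2 * u^2) := by
  intro k
  induction k with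
  | zero => simp
  | succ k ih =>
    have h1 : 2*(k+1)+1 = (2*k) + 3 := by ring
    have h2 : ∀ i ∈ Finset.range (2*k+3),
        (z₀ + u*(((2*(k+1) : ℕ):ℂ) - 2*(i:ℕ))) = (z₀ + u*((((2*k : ℕ)):ℂ)+2 - 2*(i:ℕ))) := by
      intro i _; push_cast; ring
    rw [h1, Finset.prod_congr rfl h2, prod_step, ih, Finset.prod_range_succ]
    push_cast
    ring

lemma prod_odd (z₀ u : ℂ) : ∀ k : ℕ,
    ∏ i ∈ Finset.range (2*k+2), (z₀ + u*(((2*k+1 : ℕ):ℂ) - 2*(i:ℕ))) =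
      ∏ l ∈ Finset.range (k+1), (z₀^2 - (2*(l:ℂ)+1)^2 * u^2) := by
  intro k
  induction k with
  | zero =>
    rw [show 2*0+2 = 2 from rfl, show (0+1) = 1 from rfl, Finset.prod_range_succ,
      Finset.prod_range_one, Finset.prod_range_one]
    push_cast
    ring
  | succ k ih =>
    have h1 : 2*(k+1)+2 = (2*k+1) + 3 := by ring
    have h2 : ∀ i ∈ Finset.range (2*k+1+3),
        (z₀ + u*(((2*(k+1)+1 : ℕ):ℂ) - 2*(i:ℕ))) = (z₀ + u*((((2*k+1 : ℕ)):ℂ)+2 - 2*(i:ℕ))) := by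
      intro i _; push_cast; ring
    rw [h1, Finset.prod_congr rfl h2, prod_step, ih]
    conv_rhs => rw [Finset.prod_range_succ]
    push_cast
    ring

theorem char_poly_irreducible_four_vars (m : ℕ) (z₀ z₁ z₂ z₃ : ℂ) :
    (∀ k : ℕ, m = 2 * k →
      (z₀ • (1 : Matrix (Fin (m + 1)) (Fin (m + 1)) ℂ) + z₁ • phiH m + z₂ • phiE m + z₃ • phiF m).det
        = z₀ * ∏ l ∈ Finset.range k, (z₀ ^ 2 - 4 * ((l : ℂ) + 1) ^ 2 * (z₁ ^ 2 + z₂ * z₃))) ∧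
    (∀ k : ℕ, m = 2 * k + 1 →
      (z₀ • (1 : Matrix (Fin (m + 1)) (Fin (m + 1)) ℂ) + z₁ • phiH m + z₂ • phiE m + z₃ • phiF m).det
        = ∏ l ∈ Finset.range (k + 1), (z₀ ^ 2 - (2 * (l : ℂ) + 1) ^ 2 * (z₁ ^ 2 + z₂ * z₃))) := by
  obtain ⟨u, hu, hdet⟩ := det_eq_prod m z₀ z₁ z₂ z₃
  have hprod : (z₀ • (1 : Matrix (Fin (m + 1)) (Fin (m + 1)) ℂ) + z₁ • phiH m + z₂ • phiE m
      + z₃ • phiF m).det = ∏ i ∈ Finset.range (m+1), (z₀ + u * ((m:ℂ) - 2*(i:ℕ))) := by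
    rw [hdet, ← Fin.prod_univ_eq_prod_range (fun i => (z₀ + u * ((m:ℂ) - 2*(i:ℕ)))) (m+1)]
  constructor
  · intro k hk
    subst hk
    rw [hprod, show 2*k+1 = 2*k+1 from rfl, prod_even z₀ u k]
    rw [← hu]
  · intro k hk
    subst hk
    rw [hprod, show 2*k+1+1 = 2*k+2 from rfl, prod_odd z₀ u k]
    rw [← hu]
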